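/- (Chakiri's Lemma) Let g = g₁ g₂ ⋯ g_k be a factorized expression in a group H. Then the factorization (g₁,…,g_k) is invariant under gᵐ for every integer m; that is, the termwise conjugate (g⁻ᵐ g₁ gᵐ, …, g⁻ᵐ g_k gᵐ) is Hurwitz equivalent to (g₁,…,g_k). -/

import Mathlib

/-- A single Hurwitz move: replace an adjacent pair `(a, b)` in a tuple by
`(a * b * a⁻¹, a)`, leaving the other entries unchanged. -/
def HurwitzMove {G : Type*} [Group G] (L L' : List G) : Prop :=
  ∃ (l₁ l₂ : List G) (a b : G),
    L = l₁ ++ a :: b :: l₂ ∧ L' = l₁ ++ (a * b * a⁻¹) :: a :: l₂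

/-- Two tuples are Hurwitz equivalent if one is obtained from the other by a
finite sequence of Hurwitz moves and inverses of Hurwitz moves. -/
def HurwitzEquiv {G : Type*} [Group G] : List G → List G → Prop :=
  Relation.EqvGen HurwitzMove

/-- A tuple `(g₁, …, g_k)` is invariant under `h` if its termwise conjugate
`(h⁻¹g₁h, …, h⁻¹g_kh)` is Hurwitz equivalent to `(g₁, …, g_k)`. -/
def HurwitzInvariant {G : Type*} [Group G] (L : List G) (h : G) : Prop :=
  HurwitzEquiv (L.map fun g => h⁻¹ * g * h) L

section Aux

variable {G : Type*} [Group G]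

lemma HE.refl (l : List G) : HurwitzEquiv l l := Relation.EqvGen.refl l

lemma HE.symm {l l' : List G} (h : HurwitzEquiv l l') : HurwitzEquiv l' l :=
  Relation.EqvGen.symm _ _ h

lemma HE.trans {a b c : List G} (h1 : HurwitzEquiv a b) (h2 : HurwitzEquiv b c) :
    HurwitzEquiv a c := Relation.EqvGen.trans _ _ _ h1 h2

lemma HE.of_move {l l' : List G} (h : HurwitzMove l l') : HurwitzEquiv l l' :=
  Relation.EqvGen.rel _ _ h

lemma HE.lift (f : List G → List G)
    (hf : ∀ l l', HurwitzMove l l' → HurwitzMove (f l) (f l')) :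
    ∀ {l l' : List G}, HurwitzEquiv l l' → HurwitzEquiv (f l) (f l') := by
  intro l l' h
  induction h with
  | rel a b hab => exact Relation.EqvGen.rel _ _ (hf _ _ hab)
  | refl a => exact Relation.EqvGen.refl _
  | symm a b _ ih => exact Relation.EqvGen.symm _ _ ih
  | trans a b c _ _ ih1 ih2 => exact Relation.EqvGen.trans _ _ _ ih1 ih2

lemma move_cons (c : G) {l l' : List G} (h : HurwitzMove l l') :
    HurwitzMove (c :: l) (c :: l') := by
  obtain ⟨l₁, l₂, a, b, h1, h2⟩ := h
  exact ⟨c :: l₁, l₂, a, b, by simp [h1], by simp [h2]⟩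

lemma HE.cons (c : G) {l l' : List G} (h : HurwitzEquiv l l') :
    HurwitzEquiv (c :: l) (c :: l') :=
  HE.lift _ (fun _ _ => move_cons c) h

lemma move_map_conj (h : G) {l l' : List G} (hm : HurwitzMove l l') :
    HurwitzMove (l.map fun x => h⁻¹ * x * h) (l'.map fun x => h⁻¹ * x * h) := by
  obtain ⟨l₁, l₂, a, b, h1, h2⟩ := hm
  refine ⟨l₁.map fun x => h⁻¹ * x * h, l₂.map fun x => h⁻¹ * x * h,
    h⁻¹ * a * h, h⁻¹ * b * h, by simp [h1], ?_⟩
  have : h⁻¹ * (a * b * a⁻¹) * h =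
      (h⁻¹ * a * h) * (h⁻¹ * b * h) * (h⁻¹ * a * h)⁻¹ := by group
  simp [h2, this]

lemma HE.map_conj (h : G) {l l' : List G} (he : HurwitzEquiv l l') :
    HurwitzEquiv (l.map fun x => h⁻¹ * x * h) (l'.map fun x => h⁻¹ * x * h) :=
  HE.lift _ (fun _ _ => move_map_conj h) he

lemma rotate_one : ∀ (T : List G) (a : G),
    HurwitzEquiv (a :: T) (T ++ [T.prod⁻¹ * a * T.prod]) := by
  intro T
  induction T with
  | nil => intro a; simpa using HE.refl [a]
  | cons b T' ih =>
    intro a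
    have m1 : HurwitzMove (b :: (b⁻¹ * a * b) :: T') (a :: b :: T') := by
      refine ⟨[], T', b, b⁻¹ * a * b, rfl, ?_⟩
      have : b * (b⁻¹ * a * b) * b⁻¹ = a := by group
      simp [this]
    have e1 : HurwitzEquiv (a :: b :: T') (b :: (b⁻¹ * a * b) :: T') :=
      (HE.of_move m1).symm
    have e2 := HE.cons b (ih (b⁻¹ * a * b))
    have := HE.trans e1 e2
    have heq : (b :: (T' ++ [T'.prod⁻¹ * (b⁻¹ * a * b) * T'.prod])) =
        ((b :: T') ++ [(b :: T').prod⁻¹ * a * (b :: T').prod]) := by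
      simp [List.prod_cons, mul_assoc]
    rwa [heq] at this

lemma twist : ∀ (A B : List G) (g : G), g = A.prod * B.prod →
    HurwitzEquiv (A ++ B) (B ++ A.map fun x => g⁻¹ * x * g) := by
  intro A
  induction A with
  | nil => intro B g _; simpa using HE.refl B
  | cons a A' ih =>
    intro B g hgprod
    have hT : (A' ++ B).prod = a⁻¹ * g := by
      rw [List.prod_append]
      rw [List.prod_cons] at hgprod
      rw [hgprod]; group
    have h1 := rotate_one (A' ++ B) a
    rw [hT] at h1
    have hel : (a⁻¹ * g)⁻¹ * a * (a⁻¹ * g) = g⁻¹ * a * g := by group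
    rw [hel] at h1
    have h2 := ih (B ++ [g⁻¹ * a * g]) g (by
      rw [List.prod_append, List.prod_cons, List.prod_nil]
      rw [List.prod_cons] at hgprod
      rw [hgprod]; group)
    have h3 : HurwitzEquiv (a :: (A' ++ B))
        (B ++ ((g⁻¹ * a * g) :: A'.map fun x => g⁻¹ * x * g)) := by
      refine HE.trans h1 ?_
      have : (A' ++ B) ++ [g⁻¹ * a * g] = A' ++ (B ++ [g⁻¹ * a * g]) := by
        simp
      rw [this]
      refine HE.trans h2 ?_
      have : B ++ [g⁻¹ * a * g] ++ A'.map (fun x => g⁻¹ * x * g) =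
          B ++ ((g⁻¹ * a * g) :: A'.map fun x => g⁻¹ * x * g) := by simp
      rw [this]
      exact HE.refl _
    simpa using h3

end Aux

/-- Chakiri's Lemma: a factorization `g = g₁ ⋯ g_k` is invariant under `gᵐ`
for every integer `m`: the termwise conjugate of the tuple by `gᵐ` is Hurwitz
equivalent to the tuple itself. -/
theorem chakiri {H : Type*} [Group H] (L : List H) (g : H) (hg : g = L.prod)
    (m : ℤ) : HurwitzEquiv (L.map fun x => (g ^ m)⁻¹ * x * g ^ m) L := by
  have base : HurwitzEquiv L (L.map fun x => g⁻¹ * x * g) := by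
    have := twist L [] g (by simp [hg])
    simpa using this
  have base' : HurwitzEquiv (L.map fun x => (g⁻¹)⁻¹ * x * g⁻¹) L := by
    have h := HE.map_conj g⁻¹ base
    have heq : (L.map fun x => g⁻¹ * x * g).map (fun x => (g⁻¹)⁻¹ * x * g⁻¹) = L := by
      rw [List.map_map]
      conv_rhs => rw [show L = L.map id from (List.map_id L).symm]
      refine List.map_congr_left ?_
      intro x _
      simp only [Function.comp, id]
      group
    rw [heq] at h
    exact h
  induction m using Int.induction_on with
  | zero => simpa using HE.refl L
  | succ n ih =>
    have heq : (L.map fun x => (g ^ ((n : ℤ) + 1))⁻¹ * x * g ^ ((n : ℤ) + 1)) =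
        (L.map fun x => (g ^ (n : ℤ))⁻¹ * x * g ^ (n : ℤ)).map
          (fun x => g⁻¹ * x * g) := by
      rw [List.map_map]
      refine List.map_congr_left ?_
      intro x _
      simp only [Function.comp]
      rw [zpow_add_one]
      group
    rw [heq]
    exact HE.trans (HE.map_conj g ih) (HE.symm base)
  | pred n ih =>
    have heq : (L.map fun x => (g ^ (-(n : ℤ) - 1))⁻¹ * x * g ^ (-(n : ℤ) - 1)) =
        (L.map fun x => (g ^ (-(n : ℤ)))⁻¹ * x * g ^ (-(n : ℤ))).map
          (fun x => (g⁻¹)⁻¹ * x * g⁻¹) := by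
      rw [List.map_map]
      refine List.map_congr_left ?_
      intro x _
      simp only [Function.comp]
      rw [zpow_sub_one]
      group
    rw [heq]
    exact HE.trans (HE.map_conj g⁻¹ ih) base'
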